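/- Let n ≥ 2 and k ≥ l ≥ 1, and let b_1 ∈ B_{(k)}, b_2 ∈ B_{(l)}. The number of winding pairs produced by the pairing procedure on the two-column diagram of b_1 ⊗ b_2 — i.e. the value H(b_1 ⊗ b_2) — is the same for every order in which the right-column dots are processed. -/

import Mathlib

open scoped BigOperators Classical

namespace HKKOTY

/-! ### q-binomial coefficients -/

/-- Gaussian binomial coefficient `[m; k]_q`, via the q-Pascal recurrence. -/
def qbin {R : Type*} [CommRing R] (q : R) : ℕ → ℕ → R
  | _, 0 => 1
  | 0, _ + 1 => 0
  | m + 1, k + 1 => qbin q m k + q ^ (k + 1) * qbin q m (k + 1)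

/-- `[m; k]_q` for integer arguments, zero unless `0 ≤ k ≤ m`. -/
def qbinZ {R : Type*} [CommRing R] (q : R) (m k : ℤ) : R :=
  if 0 ≤ m ∧ 0 ≤ k then qbin q m.toNat k.toNat else 0

/-- `[m; k]_q` for rational arguments, zero unless both are integers with `0 ≤ k ≤ m`. -/
def qbinQ {R : Type*} [CommRing R] (q : R) (m k : ℚ) : R :=
  if m.den = 1 ∧ k.den = 1 then qbinZ q m.num k.num else 0

/-! ### Partitions as sorted lists of positive integers -/

/-- A partition, encoded as a weakly decreasing list of positive integers. -/
def IsPtn (μ : List ℕ) : Prop :=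
  List.Pairwise (· ≥ ·) μ ∧ ∀ x ∈ μ, 0 < x

/-- `conjL μ i` is the `(i+1)`-st part `μ'_{i+1}` of the conjugate partition. -/
def conjL (μ : List ℕ) (i : ℕ) : ℕ := (μ.filter (fun x => i + 1 ≤ x)).length

/-- The conjugate partition, as a list. -/
def conjList (μ : List ℕ) : List ℕ := (List.range (μ.getD 0 0)).map (fun i => conjL μ i)

/-- Content composition attached to a partition `μ`:
the letter `k ≥ 1` occurs `μ_k` times. -/
def toC (μ : List ℕ) : ℕ → ℕ := fun k => μ.getD (k - 1) 0

/-- Partwise sum of two partitions (padding with zeros). -/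
def addL (α β : List ℕ) : List ℕ :=
  (List.range (max α.length β.length)).map (fun i => α.getD i 0 + β.getD i 0)

end HKKOTY


open scoped BigOperators Classical

namespace HKKOTY

/-! ### Crystals `B_{(l)}`, the combinatorial R-matrix and energy functions -/

/-- An element of the crystal `B_{(l)}` of the `l`-th symmetric power for `sl_n`:
a function recording the number of dots in each row `1, …, n`, vanishing elsewhere. -/
def isCrys (n l : ℕ) (b : ℕ → ℕ) : Prop :=
  (∀ j, (j = 0 ∨ n < j) → b j = 0) ∧ (∑ j ∈ Finset.range n, b (j + 1)) = l

/-- An element of the crystal `B_{(1^l)}` (antisymmetric tensors): at most one dot per row. -/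
def isCrysA (n l : ℕ) (b : ℕ → ℕ) : Prop :=
  isCrys n l b ∧ ∀ j, b j ≤ 1

/-- H-line rule for symmetric tensors: given available left-column dot counts `L` and
a right dot in row `a`, its partner is a left dot in the lowest available row strictly above
(`unwinding`, flag `false`), else a left dot in the lowest available row (`winding`, `true`). -/
def stepH (n : ℕ) (L : ℕ → ℕ) (a : ℕ) : Option (ℕ × Bool) :=
  match ((List.range a).filter (fun r => 1 ≤ r ∧ L r ≠ 0)).max? with
  | some r => some (r, false)
  | none =>
    match ((List.range (n + 1)).filter (fun r => 1 ≤ r ∧ L r ≠ 0)).max? with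
    | some r => some (r, true)
    | none => none

/-- H-line rule for antisymmetric tensors: the partner is the highest available left dot
not higher than row `a` (`unwinding`), else the highest available left dot (`winding`). -/
def stepA (n : ℕ) (L : ℕ → ℕ) (a : ℕ) : Option (ℕ × Bool) :=
  match (((List.range (n + 1)).filter (fun r => a ≤ r ∧ 1 ≤ r ∧ L r ≠ 0)).min?) with
  | some r => some (r, false)
  | none =>
    match (((List.range (n + 1)).filter (fun r => 1 ≤ r ∧ L r ≠ 0)).min?) with
    | some r => some (r, true)
    | none => none

/-- Run the pairing procedure on the right-column dots listed (by rows) in `o`;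
returns the remaining (unpaired) left-column dot counts and the number of winding pairs. -/
def runGen (step : (ℕ → ℕ) → ℕ → Option (ℕ × Bool)) : (ℕ → ℕ) → List ℕ → ((ℕ → ℕ) × ℕ)
  | L, [] => (L, 0)
  | L, a :: rest =>
    match step L a with
    | some (r, wind) =>
      let res := runGen step (Function.update L r (L r - 1)) rest
      (res.1, res.2 + if wind then 1 else 0)
    | none => runGen step L rest

/-- The canonical processing order of the dots of `b`: rows from top to bottom. -/
def rOrder (n : ℕ) (b : ℕ → ℕ) : List ℕ :=
  (List.range n).flatMap (fun i => List.replicate (b (i + 1)) (i + 1))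

/-- Combinatorial R-matrix and energy for symmetric tensors:
`iotaPair n b1 b2 = (b2', b1', H)` where `ι(b1 ⊗ b2) = b2' ⊗ b1'` and `H = H(b1 ⊗ b2)`. -/
def iotaPair (n : ℕ) (b1 b2 : ℕ → ℕ) : ((ℕ → ℕ) × (ℕ → ℕ) × ℕ) :=
  let res := runGen (stepH n) b1 (rOrder n b2)
  (fun r => b1 r - res.1 r, fun r => b2 r + res.1 r, res.2)

/-- Same for antisymmetric tensors; the third component is the number of winding pairs,
i.e. `-H(b1 ⊗ b2)`. -/
def iotaPairA (n : ℕ) (b1 b2 : ℕ → ℕ) : ((ℕ → ℕ) × (ℕ → ℕ) × ℕ) :=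
  let res := runGen (stepA n) b1 (rOrder n b2)
  (fun r => b1 r - res.1 r, fun r => b2 r + res.1 r, res.2)

/-- `passLeft n [b_i, …, b_{j-1}] b_j = b_j^{(i)}`: move `b_j` leftwards through the listed
factors using the isomorphism `ι`. -/
def passLeft (n : ℕ) (cs : List (ℕ → ℕ)) (b : ℕ → ℕ) : ℕ → ℕ :=
  cs.foldr (fun c acc => (iotaPair n c acc).1) b

def passLeftA (n : ℕ) (cs : List (ℕ → ℕ)) (b : ℕ → ℕ) : ℕ → ℕ :=
  cs.foldr (fun c acc => (iotaPairA n c acc).1) b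

/-- The energy `E(p) = ∑_{i<j} H(b_i ⊗ b_j^{(i+1)})` of a path (symmetric tensors). -/
def energy (n : ℕ) (p : List (ℕ → ℕ)) : ℕ :=
  ∑ j ∈ Finset.range p.length, ∑ i ∈ Finset.range j,
    (iotaPair n (p.getD i (fun _ => 0))
      (passLeft n ((p.drop (i + 1)).take (j - i - 1)) (p.getD j (fun _ => 0)))).2.2

/-- Minus the energy, `-E(p) = ∑_{i<j} (-H)(b_i ⊗ b_j^{(i+1)})`, of a path of
antisymmetric tensors (each `H` being minus the number of winding pairs). -/
def energyA (n : ℕ) (p : List (ℕ → ℕ)) : ℕ :=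
  ∑ j ∈ Finset.range p.length, ∑ i ∈ Finset.range j,
    (iotaPairA n (p.getD i (fun _ => 0))
      (passLeftA n ((p.drop (i + 1)).take (j - i - 1)) (p.getD j (fun _ => 0)))).2.2

/-- A path in `B_{(μ_1)} ⊗ ⋯ ⊗ B_{(μ_m)}`. -/
def IsPath (n : ℕ) (μ : List ℕ) (p : List (ℕ → ℕ)) : Prop :=
  p.length = μ.length ∧ ∀ j < μ.length, isCrys n (μ.getD j 0) (p.getD j (fun _ => 0))

/-- A path in `B_{(1^{μ_1})} ⊗ ⋯ ⊗ B_{(1^{μ_m})}`. -/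
def IsPathA (n : ℕ) (μ : List ℕ) (p : List (ℕ → ℕ)) : Prop :=
  p.length = μ.length ∧ ∀ j < μ.length, isCrysA n (μ.getD j 0) (p.getD j (fun _ => 0))

/-- The path `p` has content `lam`: the letter `i` occurs `lam i` times in total. -/
def PathContent (n : ℕ) (p : List (ℕ → ℕ)) (lam : ℕ → ℕ) : Prop :=
  ∀ i, 1 ≤ i → i ≤ n → (∑ j ∈ Finset.range p.length, p.getD j (fun _ => 0) i) = lam i

/-- The ground state path associated with the partition `μ`: the `(j+1)`-st factor
(0-indexed `j`) has all its dots in the row `≡ j+1 (mod n)`. -/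
def gspath (n : ℕ) (μ : List ℕ) : List (ℕ → ℕ) :=
  (List.range μ.length).map (fun j => fun x => if x = (j % n) + 1 then μ.getD j 0 else 0)

/-! ### Kashiwara operators -/

/-- Row from which `ẽ_i` removes a dot. -/
def srcI (n i : ℕ) : ℕ := if i = 0 then 1 else i + 1

/-- Row to which `ẽ_i` adds a dot. -/
def dstI (n i : ℕ) : ℕ := if i = 0 then n else i

/-- `ε_i(b)` on `B_{(l)}`. -/
def epsB (n i : ℕ) (b : ℕ → ℕ) : ℕ := b (srcI n i)

/-- `φ_i(b)` on `B_{(l)}`. -/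
def phiB (n i : ℕ) (b : ℕ → ℕ) : ℕ := b (dstI n i)

/-- The Kashiwara operator `ẽ_i` on `B_{(l)}` (`none` encodes `0`). -/
def etB (n i : ℕ) (b : ℕ → ℕ) : Option (ℕ → ℕ) :=
  if b (srcI n i) = 0 then none
  else some (fun x => if x = srcI n i then b x - 1
             else if x = dstI n i then b x + 1 else b x)

/-- `(ε_i, φ_i)` of a tensor product of crystal elements. -/
def ephiL (n i : ℕ) : List (ℕ → ℕ) → ℤ × ℤ
  | [] => (0, 0)
  | b :: rest =>
    let ec := (ephiL n i rest).1
    let pc := (ephiL n i rest).2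
    let eb : ℤ := epsB n i b
    let pb : ℤ := phiB n i b
    (max eb (eb + ec - pb), max pc (pb + pc - ec))

/-- The Kashiwara operator `ẽ_i` on a tensor product:
`ẽ_i(b ⊗ c) = (ẽ_i b) ⊗ c` if `φ_i(b) ≥ ε_i(c)`, else `b ⊗ (ẽ_i c)`. -/
def etL (n i : ℕ) : List (ℕ → ℕ) → Option (List (ℕ → ℕ))
  | [] => none
  | b :: rest =>
    if (ephiL n i rest).1 ≤ (phiB n i b : ℤ) then
      (etB n i b).map (· :: rest)
    else
      (etL n i rest).map (b :: ·)

end HKKOTY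


namespace HKKOTY

open Finset

section OrderIndep

variable {n : ℕ}

private def fil (L : ℕ → ℕ) (m : ℕ) : List ℕ := (List.range m).filter (fun r => 1 ≤ r ∧ L r ≠ 0)

private def dec (L : ℕ → ℕ) (r : ℕ) : ℕ → ℕ := Function.update L r (L r - 1)

private lemma mem_fil {L : ℕ → ℕ} {m r : ℕ} : r ∈ fil L m ↔ r < m ∧ 1 ≤ r ∧ L r ≠ 0 := by
  simp [fil, List.mem_filter, List.mem_range, and_comm]

private lemma fil_max_some {L : ℕ → ℕ} {m r : ℕ} (h : r < m) (h1 : 1 ≤ r) (h2 : L r ≠ 0)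
    (hmax : ∀ s, s < m → 1 ≤ s → L s ≠ 0 → s ≤ r) : (fil L m).max? = some r := by
  rw [List.max?_eq_some_iff']
  refine ⟨mem_fil.mpr ⟨h, h1, h2⟩, ?_⟩
  intro x hx
  obtain ⟨hx1, hx2, hx3⟩ := mem_fil.mp hx
  exact hmax x hx1 hx2 hx3

private lemma fil_max_none {L : ℕ → ℕ} {m : ℕ} (h : ∀ s, s < m → 1 ≤ s → L s = 0) :
    (fil L m).max? = none := by
  rw [List.max?_eq_none_iff, List.eq_nil_iff_forall_not_mem]
  intro x hx
  obtain ⟨hx1, hx2, hx3⟩ := mem_fil.mp hx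
  exact hx3 (h x hx1 hx2)

private lemma of_fil_max_some {L : ℕ → ℕ} {m r : ℕ} (h : (fil L m).max? = some r) :
    (r < m ∧ 1 ≤ r ∧ L r ≠ 0) ∧ ∀ s, s < m → 1 ≤ s → L s ≠ 0 → s ≤ r := by
  rw [List.max?_eq_some_iff'] at h
  exact ⟨mem_fil.mp h.1, fun s h1 h2 h3 => h.2 s (mem_fil.mpr ⟨h1, h2, h3⟩)⟩

private lemma of_fil_max_none {L : ℕ → ℕ} {m : ℕ} (h : (fil L m).max? = none) :
    ∀ s, s < m → 1 ≤ s → L s = 0 := by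
  rw [List.max?_eq_none_iff, List.eq_nil_iff_forall_not_mem] at h
  intro s h1 h2
  by_contra h3
  exact h s (mem_fil.mpr ⟨h1, h2, h3⟩)

private lemma stepH_eq (L : ℕ → ℕ) (a : ℕ) : stepH n L a =
    match (fil L a).max? with
    | some r => some (r, false)
    | none =>
      match (fil L (n+1)).max? with
      | some r => some (r, true)
      | none => none := rfl

private lemma le_n_of {L : ℕ → ℕ} (hLn : ∀ j, n < j → L j = 0) {r : ℕ} (h : L r ≠ 0) :
    r ≤ n := by
  by_contra h'
  exact h (hLn r (by omega))

private lemma exists_max {L : ℕ → ℕ} (hsum : 1 ≤ ∑ r ∈ Finset.Icc 1 n, L r) :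
    ∃ M, (fil L (n+1)).max? = some M ∧ 1 ≤ M ∧ M ≤ n ∧ L M ≠ 0 ∧
      ∀ s, 1 ≤ s → s ≤ n → L s ≠ 0 → s ≤ M := by
  have hne : ∃ r ∈ Finset.Icc 1 n, L r ≠ 0 := by
    by_contra h
    push_neg at h
    have : ∑ r ∈ Finset.Icc 1 n, L r = 0 := Finset.sum_eq_zero h
    omega
  obtain ⟨r, hr, hr0⟩ := hne
  rw [Finset.mem_Icc] at hr
  cases hM : (fil L (n+1)).max? with
  | none => exact absurd (of_fil_max_none hM r (by omega) hr.1) hr0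
  | some M =>
    obtain ⟨⟨h1, h2, h3⟩, h4⟩ := of_fil_max_some hM
    exact ⟨M, rfl, h2, by omega, h3, fun s hs1 hs2 hs3 => h4 s (by omega) hs1 hs3⟩

private lemma dec_apply (L : ℕ → ℕ) (r s : ℕ) : dec L r s = if s = r then L r - 1 else L s := by
  simp [dec, Function.update_apply]

private lemma dec_ne {L : ℕ → ℕ} {r s : ℕ} (h : s ≠ r) : dec L r s = L s := by
  simp [dec_apply, h]

private lemma sum_dec {L : ℕ → ℕ} {r : ℕ} (h1 : 1 ≤ r) (h2 : r ≤ n) (h3 : L r ≠ 0) :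
    ∑ x ∈ Finset.Icc 1 n, dec L r x = (∑ x ∈ Finset.Icc 1 n, L x) - 1 := by
  have hr : r ∈ Finset.Icc 1 n := Finset.mem_Icc.mpr ⟨h1, h2⟩
  have e1 : ∑ x ∈ Finset.Icc 1 n, dec L r x = (L r - 1) + ∑ x ∈ Finset.Icc 1 n \ {r}, L x :=
    Finset.sum_update_of_mem hr L (L r - 1)
  have e2 : ∑ x ∈ Finset.Icc 1 n, L x = (∑ x ∈ Finset.Icc 1 n \ {r}, L x) + L r :=
    Finset.sum_eq_sum_sdiff_singleton_add hr L
  omega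

private lemma dec_hLn {L : ℕ → ℕ} (hLn : ∀ j, n < j → L j = 0) {r : ℕ} (hr : r ≤ n) :
    ∀ j, n < j → dec L r j = 0 := fun j hj => by
  rw [dec_ne (by omega)]; exact hLn j hj

private lemma runGen_cons_some {step : (ℕ → ℕ) → ℕ → Option (ℕ × Bool)} {L : ℕ → ℕ} {a : ℕ}
    {rest : List ℕ} {r : ℕ} {w : Bool} (h : step L a = some (r, w)) :
    runGen step L (a :: rest) =
      ((runGen step (dec L r) rest).1,
       (runGen step (dec L r) rest).2 + if w then 1 else 0) := by
  simp [runGen, h, dec]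

private lemma dec_comm {L : ℕ → ℕ} {r s : ℕ} (h : r ≠ s) :
    dec (dec L r) s = dec (dec L s) r := by
  funext x
  simp only [dec, Function.update_apply]
  split_ifs <;> first | rfl | omega

private lemma two_step_le (L : ℕ → ℕ) (a b : ℕ) (t : List ℕ) (hab : a ≤ b)
    (hLn : ∀ j, n < j → L j = 0)
    (hsum : 2 ≤ ∑ r ∈ Finset.Icc 1 n, L r) :
    runGen (stepH n) L (a :: b :: t) = runGen (stepH n) L (b :: a :: t) := by
  obtain ⟨M, hM, hM1, hMn, hML, hMmax⟩ := exists_max (n := n) (L := L) (by omega)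
  cases hA : (fil L a).max? with
  | none =>
    have hAe : ∀ s, s < a → 1 ≤ s → L s = 0 := of_fil_max_none hA
    have haM : a ≤ M := by
      by_contra h
      exact hML (hAe M (by omega) hM1)
    have s1 : stepH n L a = some (M, true) := by rw [stepH_eq, hA, hM]
    have hLn1 := dec_hLn hLn hMn (L := L)
    have hsum1 : 1 ≤ ∑ r ∈ Finset.Icc 1 n, dec L M r := by
      rw [sum_dec hM1 hMn hML]; omega
    obtain ⟨M1, hM1s, hM11, hM1n, hM1L, hM1max⟩ := exists_max (n := n) hsum1
    have hLM1 : L M1 ≠ 0 := by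
      rcases eq_or_ne M1 M with h | h
      · rw [h]; exact hML
      · rwa [dec_ne h] at hM1L
    have hM1M : M1 ≤ M := hMmax M1 hM11 hM1n hLM1
    cases hB : (fil L b).max? with
    | none =>
      -- Case I : no left dot above a, nor above b
      have hBe : ∀ s, s < b → 1 ≤ s → L s = 0 := of_fil_max_none hB
      have hbM : b ≤ M := by
        by_contra h
        exact hML (hBe M (by omega) hM1)
      have f1 : (fil (dec L M) b).max? = none :=
        fil_max_none (fun s h1 h2 => by rw [dec_ne (by omega)]; exact hBe s h1 h2)
      have f1' : (fil (dec L M) a).max? = none :=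
        fil_max_none (fun s h1 h2 => by rw [dec_ne (by omega)]; exact hAe s h1 h2)
      have s2 : stepH n (dec L M) b = some (M1, true) := by rw [stepH_eq, f1, hM1s]
      have s2' : stepH n (dec L M) a = some (M1, true) := by rw [stepH_eq, f1', hM1s]
      have s1' : stepH n L b = some (M, true) := by rw [stepH_eq, hB, hM]
      rw [runGen_cons_some s1, runGen_cons_some s2, runGen_cons_some s1', runGen_cons_some s2']
    | some rb =>
      obtain ⟨⟨hrb1, hrb2, hrb3⟩, hBmax⟩ := of_fil_max_some hB
      have hrbn : rb ≤ n := le_n_of hLn hrb3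
      have harb : a ≤ rb := by
        by_contra h
        exact hrb3 (hAe rb (by omega) hrb2)
      by_cases hMb : M < b
      · -- Case II : the global max M lies strictly above b
        have hrbM : rb = M := le_antisymm (hMmax rb hrb2 hrbn hrb3) (hBmax M hMb hM1 hML)
        have f1 : (fil (dec L M) b).max? = some M1 := by
          refine fil_max_some (by omega) hM11 hM1L ?_
          intro s hs1 hs2 hs3
          exact hM1max s hs2 (le_n_of hLn1 hs3) hs3
        have s2 : stepH n (dec L M) b = some (M1, false) := by rw [stepH_eq, f1]
        have f1' : (fil (dec L M) a).max? = none :=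
          fil_max_none (fun s h1 h2 => by rw [dec_ne (by omega)]; exact hAe s h1 h2)
        have s2' : stepH n (dec L M) a = some (M1, true) := by rw [stepH_eq, f1', hM1s]
        have s1' : stepH n L b = some (M, false) := by rw [stepH_eq, hB, hrbM]
        rw [runGen_cons_some s1, runGen_cons_some s2, runGen_cons_some s1',
          runGen_cons_some s2']
        simp
      · -- Case III : M lies in row b or below
        have hrbM : rb ≠ M := by omega
        have f1 : (fil (dec L M) b).max? = some rb := by
          refine fil_max_some hrb1 hrb2 (by rwa [dec_ne hrbM]) ?_
          intro s hs1 hs2 hs3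
          rw [dec_ne (by omega)] at hs3
          exact hBmax s hs1 hs2 hs3
        have s2 : stepH n (dec L M) b = some (rb, false) := by rw [stepH_eq, f1]
        have s1' : stepH n L b = some (rb, false) := by rw [stepH_eq, hB]
        have f2' : (fil (dec L rb) a).max? = none :=
          fil_max_none (fun s h1 h2 => by rw [dec_ne (by omega)]; exact hAe s h1 h2)
        have f3' : (fil (dec L rb) (n+1)).max? = some M := by
          refine fil_max_some (by omega) hM1 (by rw [dec_ne (Ne.symm hrbM)]; exact hML) ?_
          intro s hs1 hs2 hs3
          rcases eq_or_ne s rb with h | h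
          · omega
          · rw [dec_ne h] at hs3
            exact hMmax s hs2 (le_n_of hLn hs3) hs3
        have s2' : stepH n (dec L rb) a = some (M, true) := by rw [stepH_eq, f2', f3']
        rw [runGen_cons_some s1, runGen_cons_some s2, runGen_cons_some s1',
          runGen_cons_some s2', dec_comm (show M ≠ rb by omega)]
        simp
  | some ra =>
    obtain ⟨⟨hra1, hra2, hra3⟩, hAmax⟩ := of_fil_max_some hA
    have s1 : stepH n L a = some (ra, false) := by rw [stepH_eq, hA]
    cases hB : (fil L b).max? with
    | none => exact absurd (of_fil_max_none hB ra (by omega) hra2) hra3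
    | some rb =>
      obtain ⟨⟨hrb1, hrb2, hrb3⟩, hBmax⟩ := of_fil_max_some hB
      have s1' : stepH n L b = some (rb, false) := by rw [stepH_eq, hB]
      by_cases hrba : a ≤ rb
      · -- Case IV : both unwind, at different rows
        have hne : ra ≠ rb := by omega
        have f1 : (fil (dec L ra) b).max? = some rb := by
          refine fil_max_some hrb1 hrb2 (by rwa [dec_ne (Ne.symm hne)]) ?_
          intro s hs1 hs2 hs3
          rcases eq_or_ne s ra with h | h
          · omega
          · rw [dec_ne h] at hs3
            exact hBmax s hs1 hs2 hs3
        have s2 : stepH n (dec L ra) b = some (rb, false) := by rw [stepH_eq, f1]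
        have f1' : (fil (dec L rb) a).max? = some ra := by
          refine fil_max_some hra1 hra2 (by rwa [dec_ne hne]) ?_
          intro s hs1 hs2 hs3
          rcases eq_or_ne s rb with h | h
          · omega
          · rw [dec_ne h] at hs3
            exact hAmax s hs1 hs2 hs3
        have s2' : stepH n (dec L rb) a = some (ra, false) := by rw [stepH_eq, f1']
        rw [runGen_cons_some s1, runGen_cons_some s2, runGen_cons_some s1',
          runGen_cons_some s2', dec_comm hne]
      · -- Cases V/VI : both first picks agree
        have hrba' : rb = ra :=
          le_antisymm (hAmax rb (by omega) hrb2 hrb3) (hBmax ra (by omega) hra2 hra3)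
        subst hrba'
        have key : ∀ s, a ≤ s → s < b → dec L rb s = 0 := by
          intro s hs1 hs2
          rw [dec_ne (by omega)]
          by_contra h
          have := hBmax s hs2 (by omega) h
          omega
        cases hC : (fil (dec L rb) a).max? with
        | some rc =>
          obtain ⟨⟨hrc1, hrc2, hrc3⟩, hCmax⟩ := of_fil_max_some hC
          have f1 : (fil (dec L rb) b).max? = some rc := by
            refine fil_max_some (by omega) hrc2 hrc3 ?_
            intro s hs1 hs2 hs3
            by_cases h : s < a
            · exact hCmax s h hs2 hs3
            · exact absurd (key s (by omega) hs1) hs3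
          have s2 : stepH n (dec L rb) b = some (rc, false) := by rw [stepH_eq, f1]
          have s2' : stepH n (dec L rb) a = some (rc, false) := by rw [stepH_eq, hC]
          rw [runGen_cons_some s1, runGen_cons_some s2, runGen_cons_some s1',
            runGen_cons_some s2']
        | none =>
          have hCe := of_fil_max_none hC
          have f1 : (fil (dec L rb) b).max? = none := by
            refine fil_max_none ?_
            intro s hs1 hs2
            by_cases h : s < a
            · exact hCe s h hs2
            · exact key s (by omega) hs1
          have hsum1 : 1 ≤ ∑ r ∈ Finset.Icc 1 n, dec L rb r := by
            rw [sum_dec hrb2 (le_n_of hLn hrb3) hrb3]; omega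
          obtain ⟨M1, hM1s, _, _, _, _⟩ := exists_max (n := n) hsum1
          have s2 : stepH n (dec L rb) b = some (M1, true) := by rw [stepH_eq, f1, hM1s]
          have s2' : stepH n (dec L rb) a = some (M1, true) := by rw [stepH_eq, hC, hM1s]
          rw [runGen_cons_some s1, runGen_cons_some s2, runGen_cons_some s1',
            runGen_cons_some s2']

private lemma two_step (L : ℕ → ℕ) (a b : ℕ) (t : List ℕ)
    (hLn : ∀ j, n < j → L j = 0)
    (hsum : 2 ≤ ∑ r ∈ Finset.Icc 1 n, L r) :
    runGen (stepH n) L (a :: b :: t) = runGen (stepH n) L (b :: a :: t) := by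
  rcases le_total a b with h | h
  · exact two_step_le L a b t h hLn hsum
  · exact (two_step_le L b a t h hLn hsum).symm

private lemma stepH_spec (L : ℕ → ℕ) (x : ℕ) (hLn : ∀ j, n < j → L j = 0)
    (hsum : 1 ≤ ∑ r ∈ Finset.Icc 1 n, L r) :
    ∃ r w, stepH n L x = some (r, w) ∧ 1 ≤ r ∧ r ≤ n ∧ L r ≠ 0 := by
  cases hA : (fil L x).max? with
  | some r =>
    obtain ⟨⟨h1, h2, h3⟩, _⟩ := of_fil_max_some hA
    exact ⟨r, false, by rw [stepH_eq, hA], h2, le_n_of hLn h3, h3⟩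
  | none =>
    obtain ⟨M, hM, h1, h2, h3, _⟩ := exists_max hsum
    exact ⟨M, true, by rw [stepH_eq, hA, hM], h1, h2, h3⟩

private lemma run_perm {o o' : List ℕ} (h : o.Perm o') :
    ∀ L : ℕ → ℕ, (∀ j, n < j → L j = 0) → o.length ≤ ∑ r ∈ Finset.Icc 1 n, L r →
    runGen (stepH n) L o = runGen (stepH n) L o' := by
  induction h with
  | nil => intro L _ _; rfl
  | cons x h ih =>
    intro L hLn hlen
    simp only [List.length_cons] at hlen
    obtain ⟨r, w, hs, h1, h2, h3⟩ := stepH_spec L x hLn (by omega)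
    rw [runGen_cons_some hs, runGen_cons_some hs,
      ih (dec L r) (dec_hLn hLn h2) (by rw [sum_dec h1 h2 h3]; omega)]
  | swap x y l =>
    intro L hLn hlen
    simp only [List.length_cons] at hlen
    exact two_step L y x l hLn (by omega)
  | trans h1 h2 ih1 ih2 =>
    intro L hLn hlen
    rw [ih1 L hLn hlen, ih2 L hLn (by rw [← h1.length_eq]; exact hlen)]

private lemma sum_shift (m : ℕ) (f : ℕ → ℕ) :
    ∑ j ∈ Finset.range m, f (j+1) = ∑ r ∈ Finset.Icc 1 m, f r := by
  rw [← Finset.Ico_add_one_right_eq_Icc, Finset.sum_Ico_eq_sum_range]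
  simp [Nat.add_comm]

private lemma rOrder_length (b : ℕ → ℕ) :
    (rOrder n b).length = ∑ j ∈ Finset.range n, b (j+1) := by
  simp [rOrder, List.length_flatMap, Function.comp_def]
  rfl

end OrderIndep

/-- **Order-independence of the H-line pairing: the energy function `H`.**
For `b_1 ∈ B_{(k)}`, `b_2 ∈ B_{(l)}` with `k ≥ l`, the number of winding pairs produced by
the pairing procedure, i.e. the value `H(b_1 ⊗ b_2)`, does not depend on the order in
which the right-column dots are processed. -/
theorem H_order_independent
    (n k l : ℕ) (hn : 2 ≤ n) (hkl : l ≤ k) (hl : 1 ≤ l)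
    (b1 b2 : ℕ → ℕ) (hb1 : isCrys n k b1) (hb2 : isCrys n l b2)
    (o o' : List ℕ) (ho : o.Perm (rOrder n b2)) (ho' : o'.Perm (rOrder n b2)) :
    (runGen (stepH n) b1 o).2 = (runGen (stepH n) b1 o').2 := by
  have hLn : ∀ j, n < j → b1 j = 0 := fun j hj => hb1.1 j (Or.inr hj)
  have hsum : ∑ r ∈ Finset.Icc 1 n, b1 r = k := by
    rw [← sum_shift]; exact hb1.2
  have hlen : o.length = l := by
    rw [ho.length_eq, rOrder_length, hb2.2]
  rw [run_perm (ho.trans ho'.symm) b1 hLn (by omega)]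

end HKKOTY
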